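/- Every finite word w over any alphabet has at most |w|+1 distinct palindromic factors (counting the empty word as a palindromic factor). -/

import Mathlib

/-- A word is a palindrome if it equals its reversal. -/
def Palindromic {α : Type*} (w : List α) : Prop := w.reverse = w

/-- A finite word is rich if it has exactly |w|+1 distinct palindromic factors
(including the empty word). -/
def Rich {α : Type*} (w : List α) : Prop :=
  {p : List α | p <:+: w ∧ Palindromic p}.ncard = w.length + 1

/-- A word is square-free if it has no factor of the form `u ++ u` with `u` nonempty. -/
def SqFree {α : Type*} (w : List α) : Prop :=
  ∀ u : List α, u ≠ [] → ¬ (u ++ u) <:+: w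

lemma palSet_finite {α : Type*} (w : List α) :
    {p : List α | p <:+: w ∧ Palindromic p}.Finite := by
  classical
  apply Set.Finite.subset w.sublists.toFinset.finite_toSet
  intro p hp
  simp only [List.coe_toFinset, Set.mem_setOf_eq, List.mem_sublists]
  exact hp.1.sublist

theorem word_has_at_most_len_succ_palindromic_factors {α : Type*} (w : List α) :
    {p : List α | p <:+: w ∧ Palindromic p}.ncard ≤ w.length + 1 := by
  induction w with
  | nil =>
    have : {p : List α | p <:+: ([] : List α) ∧ Palindromic p} = {[]} := by
      ext p
      simp only [Set.mem_setOf_eq, Set.mem_singleton_iff, List.infix_nil]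
      constructor
      · rintro ⟨h, _⟩; exact h
      · rintro rfl; exact ⟨rfl, rfl⟩
    rw [this]; simp
  | cons a t ih =>
    set S := {p : List α | p <:+: t ∧ Palindromic p} with hS
    set T := {p : List α | p <:+: (a :: t) ∧ Palindromic p} with hT
    -- every element of T \ S is a palindromic prefix of a :: t
    have hpre : ∀ p ∈ T \ S, p <+: (a :: t) := by
      rintro p ⟨⟨hinf, hpal⟩, hns⟩
      rcases List.infix_cons_iff.1 hinf with h | h
      · exact h
      · exact absurd ⟨h, hpal⟩ hns
    have hsub : (T \ S).Subsingleton := by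
      intro p hp q hq
      -- wlog lengths
      suffices H : ∀ p q : List α, p ∈ T \ S → q ∈ T \ S → p.length ≤ q.length → p = q by
        rcases Nat.le_total p.length q.length with h | h
        · exact H p q hp hq h
        · exact (H q p hq hp h).symm
      clear hp hq p q
      rintro p q hp hq hlen
      by_contra hne
      have hppal := hp.1.2
      have hqpal := hq.1.2
      have hpns := hp.2
      have hp' := hpre p hp
      have hq' := hpre q hq
      -- p is a prefix of q
      have hpq : p <+: q := List.prefix_of_prefix_length_le hp' hq' hlen
      -- p is a suffix of q (both palindromes)
      have hpsq : p <:+ q := by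
        rw [← List.reverse_prefix, hppal, hqpal]; exact hpq
      obtain ⟨u, hu⟩ := hpsq
      have hune : u ≠ [] := by
        rintro rfl
        exact hne (by simpa using hu)
      obtain ⟨v, hv⟩ := hq'
      -- a :: t = u ++ p ++ v, u nonempty
      rw [← hu] at hv
      cases u with
      | nil => exact hune rfl
      | cons b u' =>
        have h2 : t = u' ++ (p ++ v) := by simpa using (congrArg List.tail hv).symm
        exact hpns ⟨⟨u', v, by rw [← List.append_assoc] at h2; exact h2.symm⟩, hppal⟩
    have hTsub : T ⊆ S ∪ (T \ S) := by
      intro p hp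
      by_cases h : p ∈ S
      · exact Or.inl h
      · exact Or.inr ⟨hp, h⟩
    have hfin : (S ∪ (T \ S)).Finite :=
      (palSet_finite t).union ((palSet_finite (a :: t)).diff (t := S))
    calc T.ncard ≤ (S ∪ (T \ S)).ncard := Set.ncard_le_ncard hTsub hfin
      _ ≤ S.ncard + (T \ S).ncard := Set.ncard_union_le _ _
      _ ≤ (t.length + 1) + 1 := by
          apply Nat.add_le_add ih
          rcases (T \ S).eq_empty_or_nonempty with h | ⟨q, hq⟩
          · simp [h]
          · have : T \ S ⊆ {q} := fun x hx => hsub hx hq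
            calc (T \ S).ncard ≤ ({q} : Set (List α)).ncard :=
                  Set.ncard_le_ncard this (Set.finite_singleton q)
              _ = 1 := Set.ncard_singleton q
      _ = (a :: t).length + 1 := by simp
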